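/- Let u, m, V, v be natural numbers with u ≥ 3, m ≥ 1, m ≤ V, and v > 4·u·V·log₂(u·V) (as real numbers). Then (m·u)^{2u} · v^{V} < 2^v. -/

import Mathlib

/-- `log₂ t ≤ (5/6)·t` for all positive `t`. -/
lemma aux_logb_le (t : ℝ) (htpos : 0 < t) : Real.logb 2 t ≤ 5 / 6 * t := by
  have hlog2 : (0.6931471803:ℝ) < Real.log 2 := Real.log_two_gt_d9
  have hs := Real.log_le_sub_one_of_pos (Real.sqrt_pos.mpr htpos)
  have hsq : Real.sqrt t ^ 2 = t := Real.sq_sqrt htpos.le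
  have hls : Real.log (Real.sqrt t) = Real.log t / 2 := Real.log_sqrt htpos.le
  have hlogt' : Real.log t ≤ 5 / 6 * Real.log 2 * t := by
    nlinarith [sq_nonneg (Real.sqrt t - 2), Real.sqrt_nonneg t]
  rw [Real.logb, div_le_iff₀ (by linarith)]
  linarith

/-- Core log inequality over the reals. -/
lemma aux_main (u m V v : ℝ) (hu' : 3 ≤ u) (hm' : 1 ≤ m) (hmV' : m ≤ V)
    (hv : 4 * u * V * Real.logb 2 (u * V) < v) :
    2 * u * Real.logb 2 (m * u) + V * Real.logb 2 v < v := by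
  have hV' : (1:ℝ) ≤ V := le_trans hm' hmV'
  have hx3 : (3:ℝ) ≤ u * V := by nlinarith
  have hxpos : (0:ℝ) < u * V := by linarith
  have hL1 : 1 < Real.logb 2 (u * V) := by
    rw [show (1:ℝ) = Real.logb 2 2 by simp]
    exact Real.logb_lt_logb one_lt_two two_pos (by linarith)
  have hLpos : 0 < Real.logb 2 (u * V) := by linarith
  have hvpos : (0:ℝ) < v := by nlinarith
  have hVpos : (0:ℝ) < V := by linarith
  set L := Real.logb 2 (u * V) with hL
  set t : ℝ := v / (2 * V) with ht
  have htv : v = 2 * V * t := by rw [ht]; field_simp [hVpos.ne']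
  have ht_gt : 6 * L < t := by
    rw [ht, lt_div_iff₀ (by linarith)]
    nlinarith
  have htpos : 0 < t := by linarith
  -- log₂(2V) ≤ t/6
  have h2V : Real.logb 2 (2 * V) ≤ t / 6 := by
    have h1 : Real.logb 2 (2 * V) ≤ L := by
      rw [hL, Real.logb_le_logb one_lt_two (by linarith) hxpos]
      nlinarith
    linarith
  have hlogt : Real.logb 2 t ≤ 5 / 6 * t := aux_logb_le t htpos
  -- V * log₂ v ≤ v / 2
  have hVlogv : V * Real.logb 2 v ≤ v / 2 := by
    have hsplit : Real.logb 2 v = Real.logb 2 (2 * V) + Real.logb 2 t := by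
      rw [htv, Real.logb_mul (by positivity) (by positivity)]
    rw [hsplit, htv]
    nlinarith [mul_le_mul_of_nonneg_left h2V hVpos.le, mul_le_mul_of_nonneg_left hlogt hVpos.le]
  -- 2u * log₂(mu) < v / 2
  have hmu_pos : (0:ℝ) < m * u := mul_pos (by linarith) (by linarith)
  have h2u : 2 * u * Real.logb 2 (m * u) < v / 2 := by
    have h1 : Real.logb 2 (m * u) ≤ L := by
      rw [hL, Real.logb_le_logb one_lt_two hmu_pos hxpos, mul_comm]
      exact mul_le_mul_of_nonneg_left hmV' (by linarith)
    have h2 : 2 * u * Real.logb 2 (m * u) ≤ 2 * u * L :=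
      mul_le_mul_of_nonneg_left h1 (by linarith)
    have hu_le : u ≤ u * V := le_mul_of_one_le_right (by linarith) hV'
    have h3 : 2 * u * L ≤ 2 * (u * V) * L :=
      mul_le_mul_of_nonneg_right (by linarith) hLpos.le
    linarith
  linarith

/-- For `u ≥ 3`, `1 ≤ m ≤ V` and `v > 4·u·V·log₂(u·V)` (as reals), one has
`(m·u)^(2u) · v^V < 2^v`. -/
theorem multijoin_counting_ineq (u m V v : ℕ) (hu : 3 ≤ u) (hm : 1 ≤ m) (hmV : m ≤ V)
    (hv : (4 : ℝ) * u * V * Real.logb 2 (u * V) < v) :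
    ((m : ℝ) * u) ^ (2 * u) * (v : ℝ) ^ V < 2 ^ v := by
  have hV : 1 ≤ V := le_trans hm hmV
  have hu' : (3:ℝ) ≤ (u:ℝ) := by exact_mod_cast hu
  have hV' : (1:ℝ) ≤ (V:ℝ) := by exact_mod_cast hV
  have hm' : (1:ℝ) ≤ (m:ℝ) := by exact_mod_cast hm
  have hmV' : (m:ℝ) ≤ (V:ℝ) := by exact_mod_cast hmV
  have hsum := aux_main (u:ℝ) (m:ℝ) (V:ℝ) (v:ℝ) hu' hm' hmV' hv
  have hmu_pos : (0:ℝ) < (m:ℝ) * u := mul_pos (by linarith) (by linarith)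
  have hx3 : (3:ℝ) ≤ (u:ℝ) * V := by nlinarith
  have hL1 : 1 < Real.logb 2 ((u:ℝ) * V) := by
    rw [show (1:ℝ) = Real.logb 2 2 by simp]
    exact Real.logb_lt_logb one_lt_two two_pos (by linarith)
  have hvpos : (0:ℝ) < (v:ℝ) := by nlinarith
  have e1 : ((m:ℝ) * u) ^ (2 * u) = (2:ℝ) ^ (Real.logb 2 ((m:ℝ) * u) * (2 * u : ℕ)) := by
    rw [Real.rpow_mul (by norm_num), Real.rpow_logb two_pos (by norm_num) hmu_pos,
      Real.rpow_natCast]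
  have e2 : (v:ℝ) ^ V = (2:ℝ) ^ (Real.logb 2 (v:ℝ) * (V : ℕ)) := by
    rw [Real.rpow_mul (by norm_num), Real.rpow_logb two_pos (by norm_num) hvpos,
      Real.rpow_natCast]
  have e3 : (2:ℝ) ^ v = (2:ℝ) ^ ((v:ℕ) : ℝ) := (Real.rpow_natCast 2 v).symm
  rw [e1, e2, e3, ← Real.rpow_add two_pos]
  rw [Real.rpow_lt_rpow_left_iff one_lt_two]
  push_cast
  linarith
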